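/- Let a, b ∈ ℝⁿ with a ⪰_no b (a majorizes b in the natural order). Let a⁺ be an isotonic projection of a onto K_n and let b⁺ be an isotonic projection of b onto K_n. Then a⁺ ⪰ b⁺, i.e. the isotonic projection of a majorizes the isotonic projection of b. -/

import Mathlib

noncomputable section

/-- The monotone (isotonic) cone of nonincreasing vectors in `ℝⁿ`. -/
def monoCone (n : ℕ) : Set (EuclideanSpace ℝ (Fin n)) :=
  {x | ∀ i j : Fin n, i ≤ j → x j ≤ x i}

/-- `p` is an isotonic projection of `y` onto the monotone cone. -/
def IsIsoProj {n : ℕ} (y p : EuclideanSpace ℝ (Fin n)) : Prop :=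
  p ∈ monoCone n ∧ ∀ w ∈ monoCone n, ‖y - p‖ ≤ ‖y - w‖

/-- The sum of the `k` largest entries of `x`, i.e. the maximum of `∑ i ∈ S, x i`
over all subsets `S` of cardinality `k`. -/
def topKSum {n : ℕ} (x : Fin n → ℝ) (k : ℕ) : ℝ :=
  sSup ((fun S : Finset (Fin n) => ∑ i ∈ S, x i) '' {S | S.card = k})

/-- `a` majorizes `b`: for every `k = 1, …, n` the sum of the `k` largest entries of
`a` is at least that of `b`, and the total sums agree. -/
def Majorizes {n : ℕ} (a b : Fin n → ℝ) : Prop :=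
  (∀ k, 1 ≤ k → k ≤ n → topKSum b k ≤ topKSum a k) ∧ ∑ i, a i = ∑ i, b i

/-- Partial sum of the first `k` coordinates (in natural order). -/
def partialSum {n : ℕ} (a : Fin n → ℝ) (k : ℕ) : ℝ :=
  ∑ i ∈ Finset.univ.filter (fun i : Fin n => (i : ℕ) < k), a i

/-- `a` majorizes `b` in the natural order. -/
def MajorizesNO {n : ℕ} (a b : Fin n → ℝ) : Prop :=
  (∀ k, 1 ≤ k → k ≤ n → partialSum b k ≤ partialSum a k) ∧
    partialSum a n = partialSum b n

end

open Finset RealInnerProductSpace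

noncomputable section
/-- extension by zero -/
def zext {n : ℕ} (x : Fin n → ℝ) (i : ℕ) : ℝ := if h : i < n then x ⟨i, h⟩ else 0

lemma zext_coe {n : ℕ} (x : Fin n → ℝ) (i : Fin n) : zext x (i : ℕ) = x i := by
  simp [zext, i.isLt]

lemma partialSum_eq {n : ℕ} (x : Fin n → ℝ) {k : ℕ} (hk : k ≤ n) :
    partialSum x k = ∑ i ∈ range k, zext x i := by
  rw [partialSum, Finset.sum_filter]
  have h1 : ∀ i ∈ (univ : Finset (Fin n)), (if (i : ℕ) < k then x i else 0)
      = (fun j : ℕ => if j < k then zext x j else 0) (i : ℕ) := by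
    intro i _; simp only [zext_coe]
  rw [Finset.sum_congr rfl h1]; rw [Fin.sum_univ_eq_sum_range (fun j => if j < k then zext x j else 0) n]
  rw [← Finset.sum_subset (Finset.range_subset_range.2 hk)]
  · exact Finset.sum_congr rfl fun i hi => if_pos (Finset.mem_range.1 hi)
  · intro i _ hi; simp [Finset.mem_range] at hi; simp [hi]

lemma partialSum_n {n : ℕ} (x : Fin n → ℝ) : partialSum x n = ∑ i, x i := by
  rw [partialSum]; apply Finset.sum_congr _ (fun _ _ => rfl)
  ext i; simp [i.isLt]

lemma monoCone_convex (n : ℕ) : Convex ℝ (monoCone n) := by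
  intro x hx y hy s t hs ht hst i j hij
  have h1 := hx i j hij
  have h2 := hy i j hij
  simp only [PiLp.add_apply, PiLp.smul_apply, smul_eq_mul]
  nlinarith

lemma inner_eq_sum {n : ℕ} (x y : EuclideanSpace ℝ (Fin n)) :
    (inner ℝ (x) (y) : ℝ) = ∑ i ∈ range n, zext (x : Fin n → ℝ) i * zext (y : Fin n → ℝ) i := by
  simp only [PiLp.inner_apply, RCLike.inner_apply, starRingEnd_apply, star_trivial]
  have h1 : ∀ i ∈ (univ : Finset (Fin n)), y i * x i
      = (fun j => zext (x : Fin n → ℝ) j * zext (y : Fin n → ℝ) j) (i : ℕ) := by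
    intro i _; simp only [zext_coe]; ring
  rw [Finset.sum_congr rfl h1]; rw [Fin.sum_univ_eq_sum_range (fun j => zext (x : Fin n → ℝ) j * zext (y : Fin n → ℝ) j) n]

lemma zero_mem_monoCone (n : ℕ) : (0 : EuclideanSpace ℝ (Fin n)) ∈ monoCone n := by
  intro i j _; simp

/-- variational inequality -/
lemma proj_var_ineq {n : ℕ} {y p : EuclideanSpace ℝ (Fin n)} (h : IsIsoProj y p) :
    ∀ w ∈ monoCone n, (inner ℝ (y - p) (w - p) : ℝ) ≤ 0 := by
  have hmem : p ∈ monoCone n := h.1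
  have : Nonempty (monoCone n) := ⟨⟨0, zero_mem_monoCone n⟩⟩
  have : ‖y - p‖ = ⨅ w : monoCone n, ‖y - (w : EuclideanSpace ℝ (Fin n))‖ := by
    apply le_antisymm
    · apply le_ciInf; intro w; exact h.2 w w.2
    · exact ciInf_le ⟨0, by rintro r ⟨w, rfl⟩; positivity⟩ (⟨p, hmem⟩ : monoCone n)
  exact (norm_eq_iInf_iff_real_inner_le_zero (monoCone_convex n) hmem).1 this

lemma proj_inner_self {n : ℕ} {y p : EuclideanSpace ℝ (Fin n)} (h : IsIsoProj y p) :
    (inner ℝ (y - p) (p) : ℝ) = 0 := by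
  have h0 := proj_var_ineq h 0 (zero_mem_monoCone n)
  have h2 := proj_var_ineq h ((2 : ℝ) • p) (by
    intro i j hij
    have := h.1 i j hij
    simp only [PiLp.smul_apply, smul_eq_mul]
    linarith)
  simp only [zero_sub, inner_neg_right] at h0
  have h2' : (inner ℝ (y - p) ((2:ℝ) • p - p) : ℝ) = (inner ℝ (y - p) (p) : ℝ) := by
    congr 1; module
  rw [h2'] at h2
  linarith

lemma proj_inner_le {n : ℕ} {y p : EuclideanSpace ℝ (Fin n)} (h : IsIsoProj y p) :
    ∀ w ∈ monoCone n, (inner ℝ (y - p) (w) : ℝ) ≤ 0 := by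
  intro w hw
  have h1 := proj_var_ineq h w hw
  rw [inner_sub_right] at h1
  rw [proj_inner_self h] at h1
  linarith
end
noncomputable section
open Finset

/-- cumulative sums -/
def cum {n : ℕ} (x : Fin n → ℝ) (k : ℕ) : ℝ := ∑ i ∈ range k, zext x i

lemma abel_sum (f g : ℕ → ℝ) (m : ℕ) : ∑ i ∈ range m, f i * g i =
    (∑ i ∈ range m, f i) * g m
      - ∑ i ∈ range m, (∑ j ∈ range (i+1), f j) * (g (i+1) - g i) := by
  induction m with
  | zero => simp
  | succ m ih =>
    rw [Finset.sum_range_succ, ih, Finset.sum_range_succ (fun i => (∑ j ∈ range (i+1), f j) * (g (i+1) - g i)),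
      Finset.sum_range_succ f]
    ring

lemma zext_sub {n : ℕ} (x y : EuclideanSpace ℝ (Fin n)) (i : ℕ) :
    zext ((x - y : EuclideanSpace ℝ (Fin n)) : Fin n → ℝ) i
      = zext (x : Fin n → ℝ) i - zext (y : Fin n → ℝ) i := by
  by_cases h : i < n <;> simp [zext, h]

lemma cum_sub {n : ℕ} (x y : EuclideanSpace ℝ (Fin n)) (k : ℕ) :
    ∑ i ∈ range k, zext ((x - y : EuclideanSpace ℝ (Fin n)) : Fin n → ℝ) i
      = cum (x : Fin n → ℝ) k - cum (y : Fin n → ℝ) k := by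
  rw [cum, cum, ← Finset.sum_sub_distrib]; exact Finset.sum_congr rfl fun i _ => zext_sub x y i

/-- the indicator of the first k coordinates -/
def ind (n k : ℕ) : EuclideanSpace ℝ (Fin n) := WithLp.toLp 2 (fun i : Fin n => if (i : ℕ) < k then 1 else 0)

lemma ind_mem (n k : ℕ) : ind n k ∈ monoCone n := by
  intro i j hij
  simp only [ind, PiLp.toLp_apply]
  by_cases h : (j : ℕ) < k
  · rw [if_pos h, if_pos (lt_of_le_of_lt (by exact_mod_cast hij) h)]
  · rw [if_neg h]; split <;> norm_num

lemma one_mem (n : ℕ) : (WithLp.toLp 2 (fun _ => (1:ℝ)) : EuclideanSpace ℝ (Fin n)) ∈ monoCone n := by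
  intro i j _; exact le_refl _

lemma neg_one_mem (n : ℕ) : (WithLp.toLp 2 (fun _ => (-1:ℝ)) : EuclideanSpace ℝ (Fin n)) ∈ monoCone n := by
  intro i j _; exact le_refl _

/-- cumulative sums of the projection dominate those of the original -/
lemma cum_proj_ge {n : ℕ} {y p : EuclideanSpace ℝ (Fin n)} (h : IsIsoProj y p)
    {k : ℕ} (hk : k ≤ n) : cum (y : Fin n → ℝ) k ≤ cum (p : Fin n → ℝ) k := by
  have h1 := proj_inner_le h (ind n k) (ind_mem n k)
  rw [inner_eq_sum] at h1
  have h2 : ∑ i ∈ range n, zext ((y - p : EuclideanSpace ℝ (Fin n)) : Fin n → ℝ) i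
        * zext ((ind n k : EuclideanSpace ℝ (Fin n)) : Fin n → ℝ) i
      = ∑ i ∈ range k, zext ((y - p : EuclideanSpace ℝ (Fin n)) : Fin n → ℝ) i := by
    rw [← Finset.sum_subset (Finset.range_subset_range.2 hk)]
    · apply Finset.sum_congr rfl
      intro i hi
      have hik : i < k := Finset.mem_range.1 hi
      have hin : i < n := lt_of_lt_of_le hik hk
      simp [zext, ind, hin, hik]
    · intro i hi hik
      have hin : i < n := Finset.mem_range.1 hi
      simp only [Finset.mem_range] at hik
      simp [zext, ind, hin, hik]
  rw [h2, cum_sub] at h1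
  linarith

/-- total sums are preserved -/
lemma cum_proj_total {n : ℕ} {y p : EuclideanSpace ℝ (Fin n)} (h : IsIsoProj y p) :
    cum (y : Fin n → ℝ) n = cum (p : Fin n → ℝ) n := by
  have h1 := proj_inner_le h _ (one_mem n)
  have h2 := proj_inner_le h _ (neg_one_mem n)
  rw [inner_eq_sum] at h1 h2
  have e1 : ∀ i ∈ range n, zext ((y - p : EuclideanSpace ℝ (Fin n)) : Fin n → ℝ) i
      * zext ((WithLp.toLp 2 (fun _ => (1:ℝ)) : EuclideanSpace ℝ (Fin n)) : Fin n → ℝ) i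
      = zext ((y - p : EuclideanSpace ℝ (Fin n)) : Fin n → ℝ) i := by
    intro i hi; have : i < n := Finset.mem_range.1 hi; simp [zext, this]
  have e2 : ∀ i ∈ range n, zext ((y - p : EuclideanSpace ℝ (Fin n)) : Fin n → ℝ) i
      * zext ((WithLp.toLp 2 (fun _ => (-1:ℝ)) : EuclideanSpace ℝ (Fin n)) : Fin n → ℝ) i
      = -zext ((y - p : EuclideanSpace ℝ (Fin n)) : Fin n → ℝ) i := by
    intro i hi; have : i < n := Finset.mem_range.1 hi; simp [zext, this]
  rw [Finset.sum_congr rfl e1, cum_sub] at h1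
  rw [Finset.sum_congr rfl e2, Finset.sum_neg_distrib, cum_sub] at h2
  linarith
end
noncomputable section
open Finset

/-- complementary slackness: at any strict decrease of `p`, cumulative sums agree -/
lemma proj_comp {n : ℕ} {y p : EuclideanSpace ℝ (Fin n)} (h : IsIsoProj y p)
    {i : ℕ} (hi : i + 1 < n) (hne : cum (y : Fin n → ℝ) (i+1) ≠ cum (p : Fin n → ℝ) (i+1)) :
    zext (p : Fin n → ℝ) (i+1) = zext (p : Fin n → ℝ) i := by
  have h0 := proj_inner_self h
  rw [inner_eq_sum] at h0
  set f : ℕ → ℝ := zext ((y - p : EuclideanSpace ℝ (Fin n)) : Fin n → ℝ) with hf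
  set g : ℕ → ℝ := zext (p : Fin n → ℝ) with hg
  rw [abel_sum f g n] at h0
  have hgn : g n = 0 := by simp [hg, zext]
  have hDsum : ∀ k, ∑ j ∈ range k, f j = cum (y : Fin n → ℝ) k - cum (p : Fin n → ℝ) k := by
    intro k; rw [hf, cum_sub]
  rw [hgn, mul_zero, zero_sub, neg_eq_zero] at h0
  have hterm : ∀ j ∈ range n, 0 ≤ (∑ l ∈ range (j+1), f l) * (g (j+1) - g j) := by
    intro j hj
    have hjn : j < n := Finset.mem_range.1 hj
    by_cases hj1 : j + 1 < n
    · have hD : (∑ l ∈ range (j+1), f l) ≤ 0 := by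
        rw [hDsum]; have := cum_proj_ge h (le_of_lt hj1); linarith
      have hgd : g (j+1) ≤ g j := by
        have := h.1 ⟨j, hjn⟩ ⟨j+1, hj1⟩ (by simp [Fin.le_def])
        simpa [hg, zext, hjn, hj1] using this
      nlinarith
    · have hj1' : j + 1 = n := by omega
      have hD : (∑ l ∈ range (j+1), f l) = 0 := by
        rw [hDsum, hj1', cum_proj_total h]; ring
      rw [hD]; simp
  have hall := (Finset.sum_eq_zero_iff_of_nonneg hterm).1 h0
  have this' := hall i (Finset.mem_range.2 (by omega))
  have hD : (∑ l ∈ range (i+1), f l) ≠ 0 := by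
    rw [hDsum]; intro hc; exact hne (by linarith)
  have : g (i+1) - g i = 0 := by
    rcases mul_eq_zero.1 this' with hc | hc
    · exact absurd hc hD
    · exact hc
  linarith [this]

/-- chord lemma for concave sequences -/
lemma chord {n : ℕ} (f : ℕ → ℝ) (g : ℕ → ℝ) (hfg : ∀ i, f (i+1) - f i = g i)
    (hconc : ∀ i j, i ≤ j → j + 1 ≤ n → g j ≤ g i)
    {p k q : ℕ} (hpk : p ≤ k) (hkq : k ≤ q) (hqn : q ≤ n) :
    ((q : ℝ) - k) * f p + ((k : ℝ) - p) * f q ≤ ((q : ℝ) - p) * f k := by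
  rcases eq_or_lt_of_le hpk with rfl | hpk'
  · ring_nf; rcases eq_or_lt_of_le hkq with rfl | _; · ring_nf; exact le_refl _
    · apply le_of_eq; ring
  rcases eq_or_lt_of_le hkq with rfl | hkq'
  · apply le_of_eq; ring
  -- now p < k < q ≤ n
  have htel : ∀ a b : ℕ, a ≤ b → f b - f a = ∑ i ∈ Ico a b, g i := by
    intro a b hab
    rw [Finset.sum_congr rfl (fun i _ => (hfg i).symm), Finset.sum_Ico_eq_sub _ hab]
    have t : ∀ m : ℕ, ∑ i ∈ range m, (f (i+1) - f i) = f m - f 0 := by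
      intro m; induction m with
      | zero => simp
      | succ m ih => rw [Finset.sum_range_succ, ih]; ring
    rw [t, t]; ring
  have h1 : (↑(k - p) : ℝ) * g (k-1) ≤ f k - f p := by
    rw [htel p k hpk]
    calc (↑(k-p) : ℝ) * g (k-1) = ∑ _i ∈ Ico p k, g (k-1) := by
          rw [Finset.sum_const, Nat.card_Ico, nsmul_eq_mul]
      _ ≤ ∑ i ∈ Ico p k, g i := by
          apply Finset.sum_le_sum
          intro i hi
          rcases Finset.mem_Ico.1 hi with ⟨_, hik⟩
          exact hconc i (k-1) (by omega) (by omega)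
  have h2 : f q - f k ≤ (↑(q - k) : ℝ) * g (k-1) := by
    rw [htel k q (le_of_lt hkq')]
    calc ∑ i ∈ Ico k q, g i ≤ ∑ _i ∈ Ico k q, g (k-1) := by
          apply Finset.sum_le_sum
          intro i hi
          rcases Finset.mem_Ico.1 hi with ⟨hki, hiq⟩
          exact hconc (k-1) i (by omega) (by omega)
      _ = (↑(q-k) : ℝ) * g (k-1) := by
          rw [Finset.sum_const, Nat.card_Ico, nsmul_eq_mul]
  have ckp : (↑(k - p) : ℝ) = (k : ℝ) - p := by
    rw [Nat.cast_sub hpk]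
  have cqk : (↑(q - k) : ℝ) = (q : ℝ) - k := by
    rw [Nat.cast_sub (le_of_lt hkq')]
  rw [ckp] at h1; rw [cqk] at h2
  have hkp : (0:ℝ) < (k:ℝ) - p := by
    have : p < k := hpk'; simp only [sub_pos]; exact_mod_cast this
  have hqk : (0:ℝ) < (q:ℝ) - k := by
    have : k < q := hkq'; simp only [sub_pos]; exact_mod_cast this
  nlinarith
end
noncomputable section
open Finset

lemma strictMono_nat_le {k : ℕ} (v : Fin k → ℕ) (hv : StrictMono v) (j : Fin k) :
    (j : ℕ) ≤ v j := by
  obtain ⟨m, hm⟩ := j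
  induction m with
  | zero => exact Nat.zero_le _
  | succ m ih =>
    have h1 : v ⟨m, by omega⟩ < v ⟨m+1, hm⟩ := hv (by simp [Fin.lt_def])
    have h2 := ih (by omega)
    simpa using lt_of_le_of_lt h2 h1

lemma sum_le_cum {n : ℕ} {xp : Fin n → ℝ} (hxp : ∀ i j : Fin n, i ≤ j → xp j ≤ xp i)
    {k : ℕ} (hk : k ≤ n) (S : Finset (Fin n)) (hS : S.card = k) :
    ∑ i ∈ S, xp i ≤ cum xp k := by
  have e := S.orderIsoOfFin hS
  have h1 : ∑ i ∈ S, xp i = ∑ j : Fin k, xp (e j) := by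
    rw [← Finset.sum_coe_sort S xp]
    exact (Equiv.sum_comp e.toEquiv (fun s : {x // x ∈ S} => xp s)).symm
  have hmono : StrictMono (fun j : Fin k => ((e j : Fin n) : ℕ)) := by
    intro i j hij
    have : (e i : Fin n) < (e j : Fin n) := e.strictMono hij
    exact_mod_cast this
  have h2 : ∀ j : Fin k, xp (e j) ≤ zext xp (j : ℕ) := by
    intro j
    have hjn : (j : ℕ) < n := lt_of_lt_of_le j.isLt hk
    have hle : (⟨(j:ℕ), hjn⟩ : Fin n) ≤ (e j : Fin n) := by
      have := strictMono_nat_le _ hmono j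
      simpa [Fin.le_def] using this
    have := hxp ⟨(j:ℕ), hjn⟩ (e j) hle
    simpa [zext, hjn] using this
  calc ∑ i ∈ S, xp i = ∑ j : Fin k, xp (e j) := h1
    _ ≤ ∑ j : Fin k, zext xp (j : ℕ) := Finset.sum_le_sum (fun j _ => h2 j)
    _ = ∑ i ∈ range k, zext xp i := Fin.sum_univ_eq_sum_range (fun i => zext xp i) k
    _ = cum xp k := rfl

lemma firstK_card {n k : ℕ} (hk : k ≤ n) :
    (Finset.univ.filter (fun i : Fin n => (i : ℕ) < k)).card = k := by
  have : Finset.univ.filter (fun i : Fin n => (i : ℕ) < k)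
      = (Finset.range k).attachFin (fun m hm => lt_of_lt_of_le (Finset.mem_range.1 hm) hk) := by
    ext i; simp [Finset.mem_attachFin]
  rw [this, Finset.card_attachFin, Finset.card_range]

lemma topKSum_eq_cum {n : ℕ} {xp : Fin n → ℝ} (hxp : ∀ i j : Fin n, i ≤ j → xp j ≤ xp i)
    {k : ℕ} (hk : k ≤ n) : topKSum xp k = cum xp k := by
  apply IsGreatest.csSup_eq
  constructor
  · refine ⟨Finset.univ.filter (fun i : Fin n => (i : ℕ) < k), firstK_card hk, ?_⟩
    have : partialSum xp k = cum xp k := partialSum_eq xp hk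
    simpa [partialSum] using this
  · rintro r ⟨S, hS, rfl⟩
    exact sum_le_cum hxp hk S hS
end
noncomputable section
open Finset

lemma main_ineq {n : ℕ} {a b ap bp : EuclideanSpace ℝ (Fin n)}
    (hap : IsIsoProj a ap) (hbp : IsIsoProj b bp)
    (hab1 : ∀ m, m ≤ n → cum (b : Fin n → ℝ) m ≤ cum (a : Fin n → ℝ) m)
    {k : ℕ} (hk : k ≤ n) :
    cum (bp : Fin n → ℝ) k ≤ cum (ap : Fin n → ℝ) k := by
  classical
  set P : ℕ → Prop := fun m => cum (b : Fin n → ℝ) m = cum (bp : Fin n → ℝ) m with hP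
  have hP0 : P 0 := by simp [hP, cum]
  have hPn : P n := cum_proj_total hbp
  by_cases hPk : P k
  · calc cum (bp : Fin n → ℝ) k = cum (b : Fin n → ℝ) k := hPk.symm
      _ ≤ cum (a : Fin n → ℝ) k := hab1 k hk
      _ ≤ cum (ap : Fin n → ℝ) k := cum_proj_ge hap hk
  · set p := Nat.findGreatest P k with hpdef
    have hp : P p := Nat.findGreatest_spec (Nat.zero_le k) hP0
    have hpk : p ≤ k := Nat.findGreatest_le k
    have hpk' : p < k := lt_of_le_of_ne hpk (fun h => hPk (h ▸ hp))
    have hp_max : ∀ m, p < m → m ≤ k → ¬ P m := fun m h1 h2 =>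
      Nat.findGreatest_is_greatest h1 h2
    have hex : ∃ j, P (k + j) := ⟨n - k, by rwa [Nat.add_sub_cancel' hk]⟩
    set q := k + Nat.find hex with hqdef
    have hq : P q := Nat.find_spec hex
    have hqn : q ≤ n := by
      have : Nat.find hex ≤ n - k := Nat.find_le (by rwa [Nat.add_sub_cancel' hk])
      omega
    have hkq : k < q := by
      rcases Nat.eq_zero_or_pos (Nat.find hex) with h0 | h0
      · exfalso; apply hPk; have := Nat.find_spec hex; rwa [h0, Nat.add_zero] at this
      · omega
    have hq_min : ∀ m, k ≤ m → m < q → ¬ P m := by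
      intro m h1 h2 hPm
      have := Nat.find_min hex (m := m - k) (by omega)
      apply this
      have : k + (m - k) = m := by omega
      rwa [this]
    -- no kinks strictly between p and q
    have hconst : ∀ d, p + d < q → zext (bp : Fin n → ℝ) (p + d) = zext (bp : Fin n → ℝ) p := by
      intro d
      induction d with
      | zero => intro _; rfl
      | succ d ih =>
        intro hd
        have hd' : p + d < q := by omega
        have hm : p + d + 1 < q := by omega
        have hmn : p + d + 1 < n ∨ p + d + 1 = n := by omega
        have hnotP : ¬ P (p + d + 1) := by
          by_cases hc : p + d + 1 ≤ k
          · exact hp_max _ (by omega) hc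
          · exact hq_min _ (by omega) (by omega)
        have hzz : zext (bp : Fin n → ℝ) (p + d + 1) = zext (bp : Fin n → ℝ) (p + d) := by
          apply proj_comp hbp (i := p + d) (by omega)
          exact fun hc => hnotP hc
        rw [show p + (d+1) = p + d + 1 from rfl, hzz, ih hd']
    have hlin : ∀ m, p ≤ m → m ≤ q → cum (bp : Fin n → ℝ) m
        = cum (bp : Fin n → ℝ) p + ((m:ℝ) - p) * zext (bp : Fin n → ℝ) p := by
      intro m h1 h2
      have hsum : cum (bp : Fin n → ℝ) m - cum (bp : Fin n → ℝ) p
          = ∑ i ∈ Ico p m, zext (bp : Fin n → ℝ) i :=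
        (Finset.sum_Ico_eq_sub _ h1).symm
      have hval : ∀ i ∈ Ico p m, zext (bp : Fin n → ℝ) i = zext (bp : Fin n → ℝ) p := by
        intro i hi
        rcases Finset.mem_Ico.1 hi with ⟨hpi, him⟩
        have := hconst (i - p) (by omega)
        rwa [Nat.add_sub_cancel' hpi] at this
      rw [Finset.sum_congr rfl hval, Finset.sum_const, Nat.card_Ico, nsmul_eq_mul,
        Nat.cast_sub h1] at hsum
      linarith
    -- chord inequality for ap
    have hchord : ((q:ℝ) - k) * cum (ap : Fin n → ℝ) p + ((k:ℝ) - p) * cum (ap : Fin n → ℝ) q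
        ≤ ((q:ℝ) - p) * cum (ap : Fin n → ℝ) k := by
      apply chord (n := n) (cum (ap : Fin n → ℝ)) (zext (ap : Fin n → ℝ))
      · intro i; rw [cum, cum, Finset.sum_range_succ]; ring
      · intro i j hij hj
        have hi : i < n := by omega
        have hj' : j < n := by omega
        have := hap.1 ⟨i, hi⟩ ⟨j, hj'⟩ (by simp [Fin.le_def]; omega)
        simpa [zext, hi, hj'] using this
      · exact hpk
      · exact le_of_lt hkq
      · exact hqn
    have hA : (0:ℝ) < (q:ℝ) - k := by
      have : (k:ℝ) < (q:ℝ) := by exact_mod_cast hkq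
      linarith
    have hB : (0:ℝ) < (k:ℝ) - p := by
      have : (p:ℝ) < (k:ℝ) := by exact_mod_cast hpk'
      linarith
    have hbpk := hlin k hpk (le_of_lt hkq)
    have hbpq := hlin q (le_trans hpk (le_of_lt hkq)) (le_refl q)
    have key1 : ((q:ℝ) - p) * cum (bp : Fin n → ℝ) k
        = ((q:ℝ) - k) * cum (bp : Fin n → ℝ) p + ((k:ℝ) - p) * cum (bp : Fin n → ℝ) q := by
      rw [hbpk, hbpq]; ring
    have key2 : ((q:ℝ) - k) * cum (b : Fin n → ℝ) p + ((k:ℝ) - p) * cum (b : Fin n → ℝ) q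
        ≤ ((q:ℝ) - k) * cum (ap : Fin n → ℝ) p + ((k:ℝ) - p) * cum (ap : Fin n → ℝ) q := by
      have h1 : cum (b : Fin n → ℝ) p ≤ cum (ap : Fin n → ℝ) p :=
        le_trans (hab1 p (by omega)) (cum_proj_ge hap (by omega))
      have h2 : cum (b : Fin n → ℝ) q ≤ cum (ap : Fin n → ℝ) q :=
        le_trans (hab1 q hqn) (cum_proj_ge hap hqn)
      nlinarith
    have : ((q:ℝ) - p) * cum (bp : Fin n → ℝ) k ≤ ((q:ℝ) - p) * cum (ap : Fin n → ℝ) k := by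
      rw [key1, ← hp, ← hq] at *
      calc ((q:ℝ) - k) * cum (b : Fin n → ℝ) p + ((k:ℝ) - p) * cum (b : Fin n → ℝ) q
          ≤ ((q:ℝ) - k) * cum (ap : Fin n → ℝ) p + ((k:ℝ) - p) * cum (ap : Fin n → ℝ) q := key2
        _ ≤ ((q:ℝ) - p) * cum (ap : Fin n → ℝ) k := hchord
    nlinarith
end

noncomputable section
open Finset

/-- If `a ⪰_no b`, then the isotonic projection of `a` majorizes the isotonic
projection of `b`. -/
theorem isotonic_projection_preserves_majorization
    {n : ℕ} (a b : EuclideanSpace ℝ (Fin n))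
    (hab : MajorizesNO (a : Fin n → ℝ) (b : Fin n → ℝ))
    (ap bp : EuclideanSpace ℝ (Fin n))
    (hap : IsIsoProj a ap) (hbp : IsIsoProj b bp) :
    Majorizes (ap : Fin n → ℝ) (bp : Fin n → ℝ) := by
  have hab1 : ∀ m, m ≤ n → cum (b : Fin n → ℝ) m ≤ cum (a : Fin n → ℝ) m := by
    intro m hm
    rcases Nat.eq_zero_or_pos m with rfl | hm1
    · simp [cum]
    · have h := hab.1 m hm1 hm
      rwa [partialSum_eq _ hm, partialSum_eq _ hm] at h
  constructor
  · intro k hk1 hkn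
    rw [topKSum_eq_cum hbp.1 hkn, topKSum_eq_cum hap.1 hkn]
    exact main_ineq hap hbp hab1 hkn
  · have h1 : ∑ i, (ap : Fin n → ℝ) i = cum (ap : Fin n → ℝ) n := by
      rw [← partialSum_n, partialSum_eq _ (le_refl n)]; rfl
    have h2 : ∑ i, (bp : Fin n → ℝ) i = cum (bp : Fin n → ℝ) n := by
      rw [← partialSum_n, partialSum_eq _ (le_refl n)]; rfl
    have h3 : cum (a : Fin n → ℝ) n = cum (b : Fin n → ℝ) n := by
      have h := hab.2
      rwa [partialSum_eq _ (le_refl n), partialSum_eq _ (le_refl n)] at h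
    rw [h1, h2, ← cum_proj_total hap, ← cum_proj_total hbp, h3]

end
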